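/- Let n be a positive integer, let ρ > 0 and τ > 0 be real numbers, and let A be a real symmetric positive semidefinite n×n matrix with eigendecomposition A = U Σ Uᵀ, where U is orthogonal and Σ is diagonal with nonnegative entries. Then the infimum over all real n×n matrices L of (ρ/2)·‖A − LᵀL‖_F² + τ·‖L‖_* equals the infimum over all pairs (Γ, W), where Γ is an n×n diagonal matrix with nonnegative entries and W is an n×n orthogonal matrix, of (ρ/2)·‖Σ − W Γ² Wᵀ‖_F² + τ·trace(Γ). -/

import Mathlib

open Matrix BigOperators Finset

noncomputable def frobNormSq {m n : ℕ} (M : Matrix (Fin m) (Fin n) ℝ) : ℝ :=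
  ∑ i, ∑ j, (M i j)^2

noncomputable def singularValues {m n : ℕ} (M : Matrix (Fin m) (Fin n) ℝ) : Fin n → ℝ :=
  fun i => Real.sqrt (((by simpa only [Matrix.conjTranspose_eq_transpose_of_trivial] using Matrix.isHermitian_conjTranspose_mul_self M : (Mᵀ * M).IsHermitian)).eigenvalues i)

noncomputable def nuclearNorm {m n : ℕ} (M : Matrix (Fin m) (Fin n) ℝ) : ℝ :=
  ∑ i, singularValues M i

section Aux

open Polynomial

variable {n : ℕ}

lemma frobNormSq_eq_trace (M : Matrix (Fin n) (Fin n) ℝ) :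
    frobNormSq M = Matrix.trace (Mᵀ * M) := by
  simp [frobNormSq, Matrix.trace, Matrix.diag, Matrix.mul_apply, pow_two]
  rw [Finset.sum_comm]

lemma frobNormSq_conj (Q M : Matrix (Fin n) (Fin n) ℝ) (hQ : Qᵀ * Q = 1) :
    frobNormSq (Q * M * Qᵀ) = frobNormSq M := by
  have hQ' : Q * Qᵀ = 1 := mul_eq_one_comm.mp hQ
  rw [frobNormSq_eq_trace, frobNormSq_eq_trace]
  calc Matrix.trace ((Q * M * Qᵀ)ᵀ * (Q * M * Qᵀ))
      = Matrix.trace (Q * (Mᵀ * ((Qᵀ * Q) * (M * Qᵀ)))) := by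
        simp only [Matrix.transpose_mul, Matrix.transpose_transpose, Matrix.mul_assoc]
    _ = Matrix.trace ((Mᵀ * (M * Qᵀ)) * Q) := by
        rw [hQ, Matrix.one_mul, Matrix.trace_mul_comm]
    _ = Matrix.trace (Mᵀ * M) := by
        simp only [Matrix.mul_assoc, hQ, Matrix.mul_one]

lemma charpoly_conj_orth (Q M : Matrix (Fin n) (Fin n) ℝ) (hQ : Qᵀ * Q = 1) :
    (Q * M * Qᵀ).charpoly = M.charpoly := by
  have hQ' : Q * Qᵀ = 1 := mul_eq_one_comm.mp hQ
  have hmap : ∀ (A B : Matrix (Fin n) (Fin n) ℝ),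
      (A * B).map (C : ℝ →+* ℝ[X]) = A.map C * B.map C := by
    intro A B; exact Matrix.map_mul
  have hcm : charmatrix (Q * M * Qᵀ) = Q.map C * charmatrix M * (Qᵀ).map C := by
    unfold charmatrix
    rw [Matrix.mul_sub, Matrix.sub_mul]
    congr 1
    · have h1 : (Matrix.scalar (Fin n) (X : ℝ[X])) = (X : ℝ[X]) • (1 : Matrix (Fin n) (Fin n) ℝ[X]) := by
        simp [Matrix.scalar, Matrix.smul_one_eq_diagonal]
      rw [h1, Matrix.mul_smul, Matrix.mul_one, Matrix.smul_mul, ← hmap, hQ']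
      simp
    · simp only [RingHom.mapMatrix_apply]
      rw [← hmap, ← hmap]
  unfold Matrix.charpoly
  rw [hcm, Matrix.det_mul, Matrix.det_mul, mul_comm, ← mul_assoc, ← Matrix.det_mul, ← hmap, hQ]
  simp

lemma charpoly_diagonal (d : Fin n → ℝ) :
    (Matrix.diagonal d).charpoly = ∏ i, (X - C (d i)) := by
  have : charmatrix (Matrix.diagonal d) = Matrix.diagonal (fun i => (X : ℝ[X]) - C (d i)) := by
    ext i j
    by_cases h : i = j
    · subst h; rw [charmatrix_apply_eq]; simp
    · rw [charmatrix_apply_ne _ _ _ h, Matrix.diagonal_apply_ne _ h, Matrix.diagonal_apply_ne _ h]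
      simp
  rw [Matrix.charpoly, this, Matrix.det_diagonal]

lemma eig_multiset (H : Matrix (Fin n) (Fin n) ℝ) (hH : H.IsHermitian)
    (Q : Matrix (Fin n) (Fin n) ℝ) (d : Fin n → ℝ) (hQ : Qᵀ * Q = 1)
    (hHd : H = Q * Matrix.diagonal d * Qᵀ) :
    Multiset.map hH.eigenvalues Finset.univ.val = Multiset.map d Finset.univ.val := by
  -- spectral theorem : H = P * diagonal eig * Pᵀ with P orthogonal
  set P : Matrix (Fin n) (Fin n) ℝ := (hH.eigenvectorUnitary : Matrix (Fin n) (Fin n) ℝ) with hP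
  have hPU : star P * P = 1 := by
    exact_mod_cast (Unitary.star_mul_self_of_mem hH.eigenvectorUnitary.2)
  have hPorth : Pᵀ * P = 1 := by
    rwa [← Matrix.conjTranspose_eq_transpose_of_trivial]
  have hspec : H = P * Matrix.diagonal hH.eigenvalues * Pᵀ := by
    have := hH.spectral_theorem
    rw [hP, ← Matrix.conjTranspose_eq_transpose_of_trivial]
    simpa [Matrix.star_eq_conjTranspose] using this
  have hcp1 : H.charpoly = ∏ i, (X - C (hH.eigenvalues i)) := by
    conv_lhs => rw [hspec]
    rw [charpoly_conj_orth _ _ hPorth, _root_.charpoly_diagonal]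
  have hcp2 : H.charpoly = ∏ i, (X - C (d i)) := by
    rw [hHd, charpoly_conj_orth _ _ hQ, _root_.charpoly_diagonal]
  have key : (∏ i, (X - C (hH.eigenvalues i))) = ∏ i, (X - C (d i)) := by
    rw [← hcp1, ← hcp2]
  have hp : ∀ f : Fin n → ℝ, (∏ i, (X - C (f i))) =
      ((Finset.univ.val.map f).map (fun a => X - C a)).prod := by
    intro f
    rw [Multiset.map_map]
    rfl
  have := congrArg Polynomial.roots key
  rwa [hp, hp, Polynomial.roots_multiset_prod_X_sub_C, Polynomial.roots_multiset_prod_X_sub_C]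
    at this

lemma sum_of_multiset_eq (f g : Fin n → ℝ) (φ : ℝ → ℝ)
    (h : Multiset.map f Finset.univ.val = Multiset.map g Finset.univ.val) :
    ∑ i, φ (f i) = ∑ i, φ (g i) := by
  have h1 : ∑ i, φ (f i) = ((Finset.univ.val.map f).map φ).sum := by
    rw [Multiset.map_map]; rfl
  have h2 : ∑ i, φ (g i) = ((Finset.univ.val.map g).map φ).sum := by
    rw [Multiset.map_map]; rfl
  rw [h1, h2, h]

end Aux

/-- With A = U Σ Uᵀ, U orthogonal, Σ = diag(σ), σᵢ ≥ 0, the infimum over L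
of (ρ/2)·‖A − LᵀL‖_F² + τ·‖L‖_* equals the infimum over pairs (Γ, W), Γ diagonal with
nonnegative entries and W orthogonal, of (ρ/2)·‖Σ − W Γ² Wᵀ‖_F² + τ·trace(Γ). -/
theorem stmt_8 (n : ℕ) (hn : 0 < n) (ρ τ : ℝ) (hρ : 0 < ρ) (hτ : 0 < τ)
    (A U : Matrix (Fin n) (Fin n) ℝ) (σ : Fin n → ℝ)
    (hA : A.PosSemidef) (hU : Uᵀ * U = 1)
    (hdec : A = U * Matrix.diagonal σ * Uᵀ)
    (hσ : ∀ i, 0 ≤ σ i) :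
    sInf {v : ℝ | ∃ L : Matrix (Fin n) (Fin n) ℝ,
        v = ρ / 2 * frobNormSq (A - Lᵀ * L) + τ * nuclearNorm L} =
      sInf {v : ℝ | ∃ γ : Fin n → ℝ, ∃ W : Matrix (Fin n) (Fin n) ℝ,
        (∀ i, 0 ≤ γ i) ∧ Wᵀ * W = 1 ∧
        v = ρ / 2 * frobNormSq (Matrix.diagonal σ -
              W * Matrix.diagonal (fun i => γ i ^ 2) * Wᵀ) +
            τ * Matrix.trace (Matrix.diagonal γ)} := by
  have hU' : U * Uᵀ = 1 := mul_eq_one_comm.mp hU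
  congr 1
  ext v
  constructor
  · -- L direction → (γ, W)
    rintro ⟨L, rfl⟩
    set hH : (Lᵀ * L).IsHermitian := (by simpa only [Matrix.conjTranspose_eq_transpose_of_trivial] using Matrix.isHermitian_conjTranspose_mul_self L) with hHdef
    have hpsd : (Lᵀ * L).PosSemidef := by
      have := Matrix.posSemidef_conjTranspose_mul_self L
      rwa [Matrix.conjTranspose_eq_transpose_of_trivial] at this
    set P : Matrix (Fin n) (Fin n) ℝ := (hH.eigenvectorUnitary : Matrix (Fin n) (Fin n) ℝ) with hP
    have hPU : star P * P = 1 := by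
      exact_mod_cast (Unitary.star_mul_self_of_mem hH.eigenvectorUnitary.2)
    have hPorth : Pᵀ * P = 1 := by
      rwa [← Matrix.conjTranspose_eq_transpose_of_trivial]
    have hPorth' : P * Pᵀ = 1 := mul_eq_one_comm.mp hPorth
    have hspec : Lᵀ * L = P * Matrix.diagonal hH.eigenvalues * Pᵀ := by
      have := hH.spectral_theorem
      rw [hP, ← Matrix.conjTranspose_eq_transpose_of_trivial (hH.eigenvectorUnitary : Matrix (Fin n) (Fin n) ℝ)]
      simpa [Matrix.star_eq_conjTranspose] using this
    refine ⟨singularValues L, Uᵀ * P, fun i => Real.sqrt_nonneg _, ?_, ?_⟩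
    · rw [Matrix.transpose_mul, Matrix.transpose_transpose, Matrix.mul_assoc,
        ← Matrix.mul_assoc U, hU', Matrix.one_mul, hPorth]
    · have hsq : (fun i => singularValues L i ^ 2) = hH.eigenvalues := by
        funext i
        exact Real.sq_sqrt (hpsd.eigenvalues_nonneg i)
      have hSig : Matrix.diagonal σ = Uᵀ * A * U := by
        rw [hdec]
        simp only [Matrix.mul_assoc, hU, Matrix.mul_one]
        rw [← Matrix.mul_assoc, hU, Matrix.one_mul]
      have heq : Matrix.diagonal σ -
          (Uᵀ * P) * Matrix.diagonal (fun i => singularValues L i ^ 2) * (Uᵀ * P)ᵀ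
          = Uᵀ * (A - Lᵀ * L) * (Uᵀ)ᵀ := by
        rw [Matrix.transpose_transpose (M := U), hsq, Matrix.mul_sub, Matrix.sub_mul,
          ← hSig]
        conv_rhs => rw [hspec]
        congr 1
        simp only [Matrix.transpose_mul, Matrix.transpose_transpose, Matrix.mul_assoc]
      have hUt : (Uᵀ)ᵀ * Uᵀ = 1 := by rwa [Matrix.transpose_transpose]
      rw [heq, frobNormSq_conj _ _ hUt, Matrix.trace_diagonal]
      simp [nuclearNorm]
  · -- (γ, W) direction → L
    rintro ⟨γ, W, hγ, hW, rfl⟩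
    have hW' : W * Wᵀ = 1 := mul_eq_one_comm.mp hW
    refine ⟨Matrix.diagonal γ * Wᵀ * Uᵀ, ?_⟩
    set L : Matrix (Fin n) (Fin n) ℝ := Matrix.diagonal γ * Wᵀ * Uᵀ with hLdef
    have hLt : Lᵀ = U * W * Matrix.diagonal γ := by
      rw [hLdef]
      simp only [Matrix.transpose_mul, Matrix.transpose_transpose, Matrix.diagonal_transpose,
        Matrix.mul_assoc]
    have hQorth : (U * W)ᵀ * (U * W) = 1 := by
      rw [Matrix.transpose_mul]
      calc Wᵀ * Uᵀ * (U * W) = Wᵀ * ((Uᵀ * U) * W) := by simp only [Matrix.mul_assoc]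
        _ = 1 := by rw [hU, Matrix.one_mul, hW]
    have hLL : Lᵀ * L = (U * W) * Matrix.diagonal (fun i => γ i ^ 2) * (U * W)ᵀ := by
      rw [hLt, hLdef, Matrix.transpose_mul]
      simp only [Matrix.mul_assoc]
      rw [← Matrix.mul_assoc (Matrix.diagonal γ) (Matrix.diagonal γ),
        Matrix.diagonal_mul_diagonal]
      simp only [pow_two]
    have hAL : A - Lᵀ * L = U * (Matrix.diagonal σ -
        W * Matrix.diagonal (fun i => γ i ^ 2) * Wᵀ) * Uᵀ := by
      rw [hdec, hLL, Matrix.mul_sub, Matrix.sub_mul]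
      congr 1
      rw [Matrix.transpose_mul]
      simp only [Matrix.mul_assoc]
    have hfrob : frobNormSq (A - Lᵀ * L) = frobNormSq (Matrix.diagonal σ -
        W * Matrix.diagonal (fun i => γ i ^ 2) * Wᵀ) := by
      rw [hAL, frobNormSq_conj _ _ hU]
    have hnuc : nuclearNorm L = Matrix.trace (Matrix.diagonal γ) := by
      have hmul := eig_multiset (Lᵀ * L) (by simpa only [Matrix.conjTranspose_eq_transpose_of_trivial] using Matrix.isHermitian_conjTranspose_mul_self L)
        (U * W) (fun i => γ i ^ 2) hQorth hLL
      have := sum_of_multiset_eq _ _ Real.sqrt hmul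
      rw [nuclearNorm, Matrix.trace_diagonal]
      unfold singularValues
      rw [this]
      congr 1
      funext i
      rw [Real.sqrt_sq (hγ i)]
    rw [hfrob, hnuc]
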